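/- Let f:[a,b]→ℝ be continuous with M := max f = -min f > 0, and let k(β) be as in the canonical β-alternance construction. Then there exists β̂ ∈ (0,1) such that k(β) = k(1) for all β ∈ (β̂, 1]. -/

import Mathlib

/-- The set of integers k such that f admits a β-alternating sequence
t₀ < ⋯ < t_k in [a,b] at level βM. -/
def altSet (f : ℝ → ℝ) (a b M β : ℝ) : Set ℕ :=
  {k | ∃ ε : ℝ, (ε = 1 ∨ ε = -1) ∧ ∃ t : ℕ → ℝ,
    a ≤ t 0 ∧ t k ≤ b ∧ (∀ i, i < k → t i < t (i + 1)) ∧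
    (∀ i, i ≤ k → t i ∈ Set.Icc a b) ∧
    (∀ i, i ≤ k → β * M ≤ ε * (-1 : ℝ) ^ i * f (t i))}

/-- k(β): the largest number of alternations at level βM. -/
noncomputable def kAlt (f : ℝ → ℝ) (a b M β : ℝ) : ℕ :=
  sSup (altSet f a b M β)


lemma altSet_mono (f : ℝ → ℝ) (a b M : ℝ) (hM : 0 ≤ M) {β β' : ℝ} (h : β' ≤ β) :
    altSet f a b M β ⊆ altSet f a b M β' := by
  rintro k ⟨ε, hε, t, h0, hb, hstr, hIcc, hlev⟩
  exact ⟨ε, hε, t, h0, hb, hstr, hIcc, fun i hi =>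
    le_trans (mul_le_mul_of_nonneg_right h hM) (hlev i hi)⟩

lemma altSet_trunc {f : ℝ → ℝ} {a b M β : ℝ} {j k : ℕ} (hjk : j ≤ k)
    (hk : k ∈ altSet f a b M β) : j ∈ altSet f a b M β := by
  obtain ⟨ε, hε, t, h0, hb, hstr, hIcc, hlev⟩ := hk
  exact ⟨ε, hε, t, h0, (hIcc j hjk).2, fun i hi => hstr i (lt_of_lt_of_le hi hjk),
    fun i hi => hIcc i (le_trans hi hjk), fun i hi => hlev i (le_trans hi hjk)⟩

lemma sign_abs {ε : ℝ} (hε : ε = 1 ∨ ε = -1) (i : ℕ) : |ε * (-1:ℝ)^i| = 1 := by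
  rcases hε with h | h <;> simp [h, abs_mul, abs_pow]

lemma altSet_bound {f : ℝ → ℝ} {a b M : ℝ} (hM : 0 < M) {δ : ℝ} (hδ : 0 < δ)
    (hud : ∀ x ∈ Set.Icc a b, ∀ y ∈ Set.Icc a b, dist x y < δ → dist (f x) (f y) < M)
    {β : ℝ} {k : ℕ} (hβ : 1/2 ≤ β) (hk : k ∈ altSet f a b M β) :
    (k : ℝ) * δ ≤ b - a := by
  obtain ⟨ε, hε, t, h0, hb, hstr, hIcc, hlev⟩ := hk
  have step : ∀ i, i < k → t i + δ ≤ t (i + 1) := by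
    intro i hi
    by_contra hcon
    push_neg at hcon
    have hd : dist (t i) (t (i + 1)) < δ := by
      rw [Real.dist_eq, abs_sub_lt_iff]
      constructor <;> nlinarith [hstr i hi]
    have hdf := hud _ (hIcc i hi.le) _ (hIcc (i + 1) hi) hd
    set s : ℝ := ε * (-1 : ℝ) ^ i with hs_def
    have hs : |s| = 1 := sign_abs hε i
    have h1 : β * M ≤ s * f (t i) := hlev i hi.le
    have h2 : β * M ≤ -s * f (t (i + 1)) := by
      have := hlev (i + 1) hi
      have hpow : ε * (-1 : ℝ) ^ (i + 1) = -s := by rw [hs_def]; ring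
      rwa [hpow] at this
    have key : M ≤ dist (f (t i)) (f (t (i + 1))) := by
      have h3 : M ≤ s * (f (t i) - f (t (i + 1))) := by nlinarith
      calc M ≤ s * (f (t i) - f (t (i + 1))) := h3
        _ ≤ |s * (f (t i) - f (t (i + 1)))| := le_abs_self _
        _ = |s| * |f (t i) - f (t (i + 1))| := abs_mul _ _
        _ = dist (f (t i)) (f (t (i + 1))) := by rw [hs, one_mul, Real.dist_eq]
    linarith
  have grow : ∀ i, i ≤ k → t 0 + (i : ℝ) * δ ≤ t i := by
    intro i
    induction i with
    | zero => simp
    | succ n ih =>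
      intro h
      have h1 := step n (by omega)
      have h2 := ih (by omega)
      push_cast
      linarith
  have := grow k le_rfl
  linarith

lemma altSet_limit (a b M : ℝ) (hab : a ≤ b) (f : ℝ → ℝ)
    (hf : ContinuousOn f (Set.Icc a b)) (hM : 0 < M) (m : ℕ)
    (h : ∀ n : ℕ, m ∈ altSet f a b M (1 - 1 / ((n : ℝ) + 2))) :
    m ∈ altSet f a b M 1 := by
  classical
  set g : ℝ → ℝ := fun x => f (Set.projIcc a b hab x) with hg_def
  have hg : Continuous g := hf.restrict.comp continuous_projIcc
  have hgf : ∀ x ∈ Set.Icc a b, g x = f x := by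
    intro x hx
    simp only [hg_def, Set.projIcc_of_mem hab hx]
  set β : ℕ → ℝ := fun n => 1 - 1 / ((n : ℝ) + 2) with hβ_def
  have hβmono : Monotone β := by
    intro n n' hnn'
    have h1 : (0:ℝ) < (n:ℝ) + 2 := by positivity
    have h2 : ((n:ℝ) + 2) ≤ ((n':ℝ) + 2) := by
      have : (n:ℝ) ≤ n' := Nat.cast_le.mpr hnn'
      linarith
    have := one_div_le_one_div_of_le h1 h2
    simp only [hβ_def]
    linarith
  have hβlim : Filter.Tendsto (fun n => β n * M) Filter.atTop (nhds M) := by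
    have h2 : Filter.Tendsto (fun n : ℕ => ((n:ℝ) + 2)) Filter.atTop Filter.atTop :=
      Filter.tendsto_atTop_add_const_right _ 2 tendsto_natCast_atTop_atTop
    have h3 : Filter.Tendsto (fun n : ℕ => 1 / ((n:ℝ) + 2)) Filter.atTop (nhds 0) := by
      simpa only [one_div, Pi.inv_def] using h2.inv_tendsto_atTop
    have h4 : Filter.Tendsto β Filter.atTop (nhds 1) := by
      have h5 := (tendsto_const_nhds (x := (1:ℝ)) (f := Filter.atTop)).sub h3
      rw [sub_zero] at h5
      exact h5
    have h6 := h4.mul_const M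
    rwa [one_mul] at h6
  -- the nested closed sets
  set F : ℕ → Set (ℝ × (Fin (m + 1) → ℝ)) := fun n =>
    (Prod.fst ⁻¹' ({1, -1} : Set ℝ)) ∩
    (⋂ i : Fin (m + 1), {p | p.2 i ∈ Set.Icc a b}) ∩
    (⋂ i : Fin m, {p | p.2 i.castSucc ≤ p.2 i.succ}) ∩
    (⋂ i : Fin (m + 1), {p | β n * M ≤ p.1 * (-1 : ℝ) ^ (i : ℕ) * g (p.2 i)}) with hF_def
  have hclosed : ∀ n, IsClosed (F n) := by
    intro n
    refine (((?_ : IsClosed _).inter ?_).inter ?_).inter ?_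
    · exact (Set.toFinite ({1, -1} : Set ℝ)).isClosed.preimage continuous_fst
    · exact isClosed_iInter fun i =>
        isClosed_Icc.preimage ((continuous_apply i).comp continuous_snd)
    · exact isClosed_iInter fun i =>
        isClosed_le ((continuous_apply _).comp continuous_snd)
          ((continuous_apply _).comp continuous_snd)
    · exact isClosed_iInter fun i =>
        isClosed_le continuous_const
          ((continuous_fst.mul continuous_const).mul
            (hg.comp ((continuous_apply i).comp continuous_snd)))
  have hsubK : ∀ n, F n ⊆ ({1, -1} : Set ℝ) ×ˢ (Set.univ.pi fun _ : Fin (m + 1) => Set.Icc a b) := by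
    intro n p hp
    obtain ⟨⟨⟨h1, h2⟩, _⟩, _⟩ := hp
    refine ⟨h1, ?_⟩
    intro i _
    exact Set.mem_iInter.mp h2 i
  have hK : IsCompact (({1, -1} : Set ℝ) ×ˢ (Set.univ.pi fun _ : Fin (m + 1) => Set.Icc a b)) :=
    (Set.toFinite _).isCompact.prod (isCompact_univ_pi fun _ => isCompact_Icc)
  have hnested : ∀ n, F (n + 1) ⊆ F n := by
    intro n p hp
    obtain ⟨h1, h2⟩ := hp
    refine ⟨h1, ?_⟩
    rw [Set.mem_iInter] at h2 ⊢
    intro i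
    have := h2 i
    have hle : β n * M ≤ β (n + 1) * M :=
      mul_le_mul_of_nonneg_right (hβmono (Nat.le_succ n)) hM.le
    exact le_trans hle this
  have hne : ∀ n, (F n).Nonempty := by
    intro n
    obtain ⟨ε, hε, t, h0, hb, hstr, hIcc, hlev⟩ := h n
    refine ⟨(ε, fun i : Fin (m + 1) => t i), ⟨⟨⟨?_, ?_⟩, ?_⟩, ?_⟩⟩
    · rcases hε with h' | h' <;> simp [h']
    · rw [Set.mem_iInter]
      intro i
      exact hIcc i (Nat.lt_succ_iff.mp i.isLt)
    · rw [Set.mem_iInter]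
      intro i
      have := hstr i i.isLt
      simpa [Fin.coe_castSucc, Fin.val_succ] using this.le
    · rw [Set.mem_iInter]
      intro i
      show β n * M ≤ ε * (-1 : ℝ) ^ (i : ℕ) * g (t (i : ℕ))
      rw [hgf _ (hIcc i (Nat.lt_succ_iff.mp i.isLt))]
      exact hlev i (Nat.lt_succ_iff.mp i.isLt)
  have hInter : (⋂ n, F n).Nonempty := by
    refine IsCompact.nonempty_iInter_of_sequence_nonempty_isCompact_isClosed F hnested hne
      ?_ hclosed
    exact hK.of_isClosed_subset (hclosed 0) (hsubK 0)
  obtain ⟨⟨ε, t⟩, hp⟩ := hInter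
  rw [Set.mem_iInter] at hp
  have hp0 := hp 0
  obtain ⟨⟨⟨hε', hIcc'⟩, hmono'⟩, _⟩ := hp0
  have hε : ε = 1 ∨ ε = -1 := by simpa using hε'
  have hIcc : ∀ i : Fin (m + 1), t i ∈ Set.Icc a b := Set.mem_iInter.mp hIcc'
  have hmono : ∀ i : Fin m, t i.castSucc ≤ t i.succ := Set.mem_iInter.mp hmono'
  have hlev : ∀ i : Fin (m + 1), M ≤ ε * (-1 : ℝ) ^ (i : ℕ) * g (t i) := by
    intro i
    refine le_of_tendsto' hβlim ?_
    intro n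
    have := hp n
    obtain ⟨_, hlev'⟩ := this
    exact Set.mem_iInter.mp hlev' i
  have hstrict : ∀ i : Fin m, t i.castSucc < t i.succ := by
    intro i
    rcases lt_or_eq_of_le (hmono i) with h' | h'
    · exact h'
    · exfalso
      have h1 := hlev i.castSucc
      have h2 := hlev i.succ
      rw [h'] at h1
      rw [Fin.coe_castSucc] at h1
      rw [Fin.val_succ] at h2
      have he : ε * (-1 : ℝ) ^ ((i : ℕ) + 1) * g (t i.succ)
          = -(ε * (-1 : ℝ) ^ (i : ℕ) * g (t i.succ)) := by ring
      rw [he] at h2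
      linarith
  -- build the ℕ-indexed sequence
  set u : ℕ → ℝ := fun j => t ⟨min j m, Nat.lt_succ_of_le (min_le_right j m)⟩ with hu_def
  have humem : ∀ j (hj : j ≤ m), u j = t ⟨j, Nat.lt_succ_of_le hj⟩ := by
    intro j hj
    simp only [hu_def]
    congr 1
    exact Fin.ext (min_eq_left hj)
  refine ⟨ε, hε, u, ?_, ?_, ?_, ?_, ?_⟩
  · rw [humem 0 (Nat.zero_le m)]
    exact (hIcc _).1
  · rw [humem m le_rfl]
    exact (hIcc _).2
  · intro i hi
    rw [humem i hi.le, humem (i + 1) hi]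
    have := hstrict ⟨i, hi⟩
    have e1 : ((⟨i, hi⟩ : Fin m).castSucc) = (⟨i, Nat.lt_succ_of_le hi.le⟩ : Fin (m + 1)) :=
      Fin.ext rfl
    have e2 : ((⟨i, hi⟩ : Fin m).succ) = (⟨i + 1, Nat.lt_succ_of_le hi⟩ : Fin (m + 1)) :=
      Fin.ext rfl
    rwa [e1, e2] at this
  · intro i hi
    rw [humem i hi]
    exact hIcc _
  · intro i hi
    rw [humem i hi, one_mul]
    have := hlev ⟨i, Nat.lt_succ_of_le hi⟩
    rwa [hgf _ (hIcc _)] at this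

/-- there exists β̂ ∈ (0,1) such that k(β) = k(1) for all
β ∈ (β̂, 1]. -/
theorem kAlt_eventually_constant
    (a b M : ℝ) (hab : a < b) (f : ℝ → ℝ)
    (hf : ContinuousOn f (Set.Icc a b))
    (hM : 0 < M)
    (hub : ∀ t ∈ Set.Icc a b, f t ≤ M)
    (hlb : ∀ t ∈ Set.Icc a b, -M ≤ f t)
    (hmax : ∃ t ∈ Set.Icc a b, f t = M)
    (hmin : ∃ t ∈ Set.Icc a b, f t = -M) :
    ∃ βhat : ℝ, 0 < βhat ∧ βhat < 1 ∧
      ∀ β : ℝ, βhat < β → β ≤ 1 → kAlt f a b M β = kAlt f a b M 1 := by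
  have huc : UniformContinuousOn f (Set.Icc a b) :=
    isCompact_Icc.uniformContinuousOn_of_continuous hf
  rw [Metric.uniformContinuousOn_iff] at huc
  obtain ⟨δ, hδ, hud⟩ := huc M hM
  obtain ⟨t0, ht0, hft0⟩ := hmax
  have h0mem : (0 : ℕ) ∈ altSet f a b M 1 := by
    refine ⟨1, Or.inl rfl, fun _ => t0, ht0.1, ht0.2, ?_, ?_, ?_⟩
    · intro i hi; omega
    · intro i _; exact ht0
    · intro i hi
      have : i = 0 := Nat.le_zero.mp hi
      subst this
      simp [hft0]
  have hbdd : ∀ β : ℝ, 1 / 2 ≤ β → BddAbove (altSet f a b M β) := by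
    intro β hβ
    refine ⟨⌊(b - a) / δ⌋₊, ?_⟩
    intro k hk
    have h1 := altSet_bound hM hδ hud hβ hk
    have hk' : (k : ℝ) ≤ (b - a) / δ := by
      rw [le_div_iff₀ hδ]; exact h1
    exact Nat.le_floor hk'
  set k₁ := kAlt f a b M 1 with hk₁
  set m := k₁ + 1 with hm
  have hkey : ∃ βh : ℝ, 1 / 2 ≤ βh ∧ βh < 1 ∧
      ∀ β, βh < β → β ≤ 1 → m ∉ altSet f a b M β := by
    by_contra hcon
    push_neg at hcon
    have hmem : ∀ n : ℕ, m ∈ altSet f a b M (1 - 1 / ((n : ℝ) + 2)) := by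
      intro n
      have h1 : (1 : ℝ) / 2 ≤ max (1 / 2) (1 - 1 / ((n : ℝ) + 2)) := le_max_left _ _
      have hlt1 : max (1 / 2 : ℝ) (1 - 1 / ((n : ℝ) + 2)) < 1 := by
        apply max_lt (by norm_num)
        have : (0 : ℝ) < 1 / ((n : ℝ) + 2) := by positivity
        linarith
      obtain ⟨β, hβ1, hβ2, hβ3⟩ := hcon _ h1 hlt1
      have h2 : 1 - 1 / ((n : ℝ) + 2) ≤ β :=
        le_trans (le_max_right _ _) hβ1.le
      exact altSet_mono f a b M hM.le h2 hβ3
    have hm1 := altSet_limit a b M hab.le f hf hM m hmem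
    have hle : m ≤ k₁ := le_csSup (hbdd 1 (by norm_num)) hm1
    omega
  obtain ⟨βh, hβh1, hβh2, hβh3⟩ := hkey
  refine ⟨βh, by linarith, hβh2, ?_⟩
  intro β hβ1 hβ2
  have hβhalf : 1 / 2 ≤ β := le_trans hβh1 hβ1.le
  have hsub : altSet f a b M 1 ⊆ altSet f a b M β := altSet_mono f a b M hM.le hβ2
  have hge : k₁ ≤ kAlt f a b M β :=
    csSup_le_csSup (hbdd β hβhalf) ⟨0, h0mem⟩ hsub
  have hle : kAlt f a b M β ≤ k₁ := by
    apply csSup_le ⟨0, hsub h0mem⟩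
    intro k hk
    by_contra hkk
    push_neg at hkk
    exact hβh3 β hβ1 hβ2 (altSet_trunc (by omega) hk)
  omega
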